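/- Let G be a finite nonempty set, R ≥ 1 an integer, σ_0 ∈ G, and let X_1, X_2, … be i.i.d. uniform random variables on G. For n ≥ 1 define g_n(σ) = #{i ≤ n : X_i = σ}. Then for any function a : G \ {σ_0} → Z/RZ, the probability Pr(g_n(σ) ≡ a(σ) mod R for all σ ∈ G \ {σ_0}) converges to R^{1−|G|} as n → ∞; moreover there exist constants C, c > 0 depending only on G and R so that this probability is within C e^{−cn} of R^{1−|G|}. -/

import Mathlib

open Filter Finset

noncomputable def extZ {G : Type*} [DecidableEq G] (R : ℕ) (σ₀ : G)
    (t : {σ : G // σ ≠ σ₀} → ZMod R) : G → ZMod R :=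
  fun g => if h : g = σ₀ then 0 else t ⟨g, h⟩

lemma addChar_map_sum {A : Type*} [AddCommGroup A] (ψ : AddChar A ℂ) {ι : Type*}
    (s : Finset ι) (f : ι → A) : ψ (∑ i ∈ s, f i) = ∏ i ∈ s, ψ (f i) := by
  induction s using Finset.cons_induction with
  | empty => simp
  | cons a s ha ih => rw [Finset.sum_cons, Finset.prod_cons, AddChar.map_add_eq_mul, ih]

lemma norm_stdAddChar {R : ℕ} [NeZero R] (x : ZMod R) : ‖ZMod.stdAddChar x‖ = 1 := by
  rw [ZMod.stdAddChar_apply, Circle.norm_coe]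

lemma stdAddChar_eq_one_iff (R : ℕ) [NeZero R] (x : ZMod R) :
    ZMod.stdAddChar x = 1 ↔ x = 0 := by
  constructor
  · intro h
    apply ZMod.injective_toCircle (N := R)
    have : ZMod.stdAddChar x = ZMod.stdAddChar (0 : ZMod R) := by simpa using h
    rw [ZMod.stdAddChar_apply, ZMod.stdAddChar_apply] at this
    exact_mod_cast Subtype.ext (by exact_mod_cast this)
  · intro h; simp [h]

lemma orth (R : ℕ) [NeZero R] (y : ZMod R) :
    ∑ u : ZMod R, ZMod.stdAddChar (y * u) = if y = 0 then (R : ℂ) else 0 := by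
  split_ifs with h
  · simp [h, ZMod.card]
  · exact AddChar.sum_eq_zero_of_ne_one (ZMod.isPrimitive_stdAddChar R h)

lemma count_sum {G : Type*} [Fintype G] [DecidableEq G] (R : ℕ) (σ₀ : G) (n : ℕ)
    (x : Fin n → G) (t : {σ : G // σ ≠ σ₀} → ZMod R) :
    ∑ σ : {σ : G // σ ≠ σ₀},
        t σ * ((Finset.univ.filter (fun i => x i = σ.1)).card : ZMod R) =
      ∑ i : Fin n, extZ R σ₀ t (x i) := by
  have hc : ∀ σ : G, ((Finset.univ.filter (fun i => x i = σ)).card : ZMod R) =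
      ∑ i : Fin n, if x i = σ then 1 else 0 := by
    intro σ
    rw [Finset.card_filter]
    push_cast
    rfl
  calc ∑ σ : {σ : G // σ ≠ σ₀},
        t σ * ((Finset.univ.filter (fun i => x i = σ.1)).card : ZMod R)
      = ∑ σ : {σ : G // σ ≠ σ₀}, ∑ i : Fin n, if x i = σ.1 then t σ else 0 := by
        refine Finset.sum_congr rfl fun σ _ => ?_
        rw [hc, Finset.mul_sum]
        simp [mul_ite]
    _ = ∑ i : Fin n, ∑ σ : {σ : G // σ ≠ σ₀}, if x i = σ.1 then t σ else 0 :=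
        Finset.sum_comm
    _ = ∑ i : Fin n, extZ R σ₀ t (x i) := by
        refine Finset.sum_congr rfl fun i _ => ?_
        by_cases h : x i = σ₀
        · rw [Finset.sum_eq_zero, extZ, dif_pos h]
          intro σ _
          exact if_neg (fun hx => σ.2 (hx.symm.trans h))
        · rw [extZ, dif_neg h]
          rw [Finset.sum_eq_single (⟨x i, h⟩ : {σ : G // σ ≠ σ₀})]
          · exact if_pos rfl
          · exact fun b _ hb => if_neg (fun hxb => hb (Subtype.ext hxb.symm))
          · exact fun h' => absurd (Finset.mem_univ _) h'

lemma key {G : Type*} [Fintype G] [DecidableEq G] (R : ℕ) [NeZero R] (σ₀ : G) (n : ℕ)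
    (a : G → ZMod R) :
    (Nat.card {x : Fin n → G // ∀ σ : G, σ ≠ σ₀ →
        (((Finset.univ.filter (fun i => x i = σ)).card : ZMod R) = a σ)} : ℂ) =
      (R : ℂ)⁻¹ ^ Fintype.card {σ : G // σ ≠ σ₀} *
        ∑ t : {σ : G // σ ≠ σ₀} → ZMod R,
          ZMod.stdAddChar (- ∑ σ : {σ : G // σ ≠ σ₀}, t σ * a σ.1) *
            (∑ g : G, ZMod.stdAddChar (extZ R σ₀ t g)) ^ n := by
  classical
  have hRne : (R : ℂ) ≠ 0 := Nat.cast_ne_zero.mpr (NeZero.ne R)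
  calc (Nat.card {x : Fin n → G // ∀ σ : G, σ ≠ σ₀ →
        (((Finset.univ.filter (fun i => x i = σ)).card : ZMod R) = a σ)} : ℂ)
      = ∑ x : Fin n → G, if (∀ σ : G, σ ≠ σ₀ →
          (((Finset.univ.filter (fun i => x i = σ)).card : ZMod R) = a σ)) then (1 : ℂ)
          else 0 := by
        rw [Nat.card_eq_fintype_card, Fintype.card_subtype, Finset.card_filter]
        push_cast
        rfl
    _ = ∑ x : Fin n → G, ∏ σ : {σ : G // σ ≠ σ₀},
          if (((Finset.univ.filter (fun i => x i = σ.1)).card : ZMod R) = a σ.1)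
          then (1 : ℂ) else 0 := by
        refine Finset.sum_congr rfl fun x _ => ?_
        rw [Fintype.prod_boole]
        refine if_congr ?_ rfl rfl
        exact ⟨fun h σ => h σ.1 σ.2, fun h g hg => h ⟨g, hg⟩⟩
    _ = ∑ x : Fin n → G, ∏ σ : {σ : G // σ ≠ σ₀},
          ((R : ℂ)⁻¹ * ∑ u : ZMod R, ZMod.stdAddChar
            ((((Finset.univ.filter (fun i => x i = σ.1)).card : ZMod R) - a σ.1) * u)) := by
        refine Finset.sum_congr rfl fun x _ => Finset.prod_congr rfl fun σ _ => ?_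
        rw [orth R]
        by_cases h : ((Finset.univ.filter (fun i => x i = σ.1)).card : ZMod R) = a σ.1
        · simp [h, inv_mul_cancel₀ hRne]
        · simp [h, sub_eq_zero]
    _ = ∑ x : Fin n → G, (R : ℂ)⁻¹ ^ Fintype.card {σ : G // σ ≠ σ₀} *
          ∑ t : {σ : G // σ ≠ σ₀} → ZMod R, ∏ σ : {σ : G // σ ≠ σ₀},
            ZMod.stdAddChar
              ((((Finset.univ.filter (fun i => x i = σ.1)).card : ZMod R) - a σ.1) * t σ) := by
        refine Finset.sum_congr rfl fun x _ => ?_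
        rw [Finset.prod_mul_distrib, Finset.prod_const, Finset.card_univ,
          Finset.prod_univ_sum, Fintype.piFinset_univ]
    _ = (R : ℂ)⁻¹ ^ Fintype.card {σ : G // σ ≠ σ₀} *
          ∑ t : {σ : G // σ ≠ σ₀} → ZMod R, ∑ x : Fin n → G, ∏ σ : {σ : G // σ ≠ σ₀},
            ZMod.stdAddChar
              ((((Finset.univ.filter (fun i => x i = σ.1)).card : ZMod R) - a σ.1) * t σ) := by
        rw [← Finset.mul_sum, Finset.sum_comm]
    _ = (R : ℂ)⁻¹ ^ Fintype.card {σ : G // σ ≠ σ₀} *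
        ∑ t : {σ : G // σ ≠ σ₀} → ZMod R,
          ZMod.stdAddChar (- ∑ σ : {σ : G // σ ≠ σ₀}, t σ * a σ.1) *
            (∑ g : G, ZMod.stdAddChar (extZ R σ₀ t g)) ^ n := by
        congr 1
        refine Finset.sum_congr rfl fun t _ => ?_
        have hx : ∀ x : Fin n → G, (∏ σ : {σ : G // σ ≠ σ₀},
            ZMod.stdAddChar
              ((((Finset.univ.filter (fun i => x i = σ.1)).card : ZMod R) - a σ.1) * t σ)) =
            ZMod.stdAddChar (- ∑ σ : {σ : G // σ ≠ σ₀}, t σ * a σ.1) *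
              ∏ i : Fin n, ZMod.stdAddChar (extZ R σ₀ t (x i)) := by
          intro x
          rw [← addChar_map_sum, ← addChar_map_sum, ← AddChar.map_add_eq_mul]
          congr 1
          rw [← count_sum R σ₀ n x t]
          rw [Finset.sum_congr rfl (fun σ _ => show
            ((((Finset.univ.filter (fun i => x i = σ.1)).card : ZMod R) - a σ.1) * t σ) =
            t σ * ((Finset.univ.filter (fun i => x i = σ.1)).card : ZMod R) - t σ * a σ.1
            by ring)]
          rw [Finset.sum_sub_distrib, sub_eq_neg_add]
        simp_rw [hx]
        rw [← Finset.mul_sum]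
        congr 1
        rw [← Fintype.piFinset_univ]
        exact (Finset.sum_prod_piFinset Finset.univ
          (fun _ k => ZMod.stdAddChar (extZ R σ₀ t k))).trans
          (by rw [Finset.prod_const, Finset.card_univ, Fintype.card_fin])

lemma norm_one_add_lt {z : ℂ} (hz : ‖z‖ = 1) (hz1 : z ≠ 1) : ‖1 + z‖ < 2 := by
  have habs : ‖z‖ = 1 := hz
  have hsq : z.re * z.re + z.im * z.im = 1 := by
    have := Complex.sq_norm z
    rw [habs, Complex.normSq_apply] at this
    nlinarith
  have hre : z.re < 1 := by
    rcases lt_or_eq_of_le ((Complex.re_le_norm z).trans_eq habs) with h | h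
    · exact h
    · exfalso
      apply hz1
      have him : z.im = 0 := by nlinarith
      exact Complex.ext (by simpa using h) (by simpa using him)
  have hnormsq : ‖1 + z‖ ^ 2 = 2 + 2 * z.re := by
    rw [Complex.sq_norm, Complex.normSq_apply]
    simp only [Complex.add_re, Complex.add_im, Complex.one_re, Complex.one_im]
    linear_combination hsq
  have h2 : ‖1 + z‖ ^ 2 < 2 ^ 2 := by rw [hnormsq]; linarith
  exact lt_of_pow_lt_pow_left₀ 2 (by norm_num) h2

lemma norm_T_lt {G : Type*} [Fintype G] [DecidableEq G] (R : ℕ) [NeZero R] (σ₀ : G)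
    (t : {σ : G // σ ≠ σ₀} → ZMod R) (ht : t ≠ 0) :
    ‖∑ g : G, ZMod.stdAddChar (extZ R σ₀ t g)‖ < Fintype.card G := by
  obtain ⟨σ₁, hσ₁⟩ : ∃ σ, t σ ≠ 0 := by
    by_contra h; push_neg at h; exact ht (funext h)
  set f : G → ℂ := fun g => ZMod.stdAddChar (extZ R σ₀ t g) with hf
  have hfσ₀ : f σ₀ = 1 := by simp [hf, extZ]
  have hfσ₁ : f σ₁.1 = ZMod.stdAddChar (t σ₁) := by
    simp only [hf, extZ, dif_neg σ₁.2]
  have hmem : σ₁.1 ∈ Finset.univ.erase σ₀ := Finset.mem_erase.mpr ⟨σ₁.2, Finset.mem_univ _⟩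
  have hsplit : ∑ g : G, f g =
      (f σ₀ + f σ₁.1) + ∑ g ∈ (Finset.univ.erase σ₀).erase σ₁.1, f g := by
    rw [← Finset.add_sum_erase _ f (Finset.mem_univ σ₀), ← Finset.add_sum_erase _ f hmem,
      add_assoc]
  have hz1 : ZMod.stdAddChar (t σ₁) ≠ 1 := fun h => hσ₁ ((stdAddChar_eq_one_iff R _).mp h)
  have h12 : ‖f σ₀ + f σ₁.1‖ < 2 := by
    rw [hfσ₀, hfσ₁]
    exact norm_one_add_lt (norm_stdAddChar _) hz1
  have hrest : ‖∑ g ∈ (Finset.univ.erase σ₀).erase σ₁.1, f g‖ ≤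
      (((Finset.univ.erase σ₀).erase σ₁.1).card : ℝ) := by
    calc ‖∑ g ∈ (Finset.univ.erase σ₀).erase σ₁.1, f g‖
        ≤ ∑ g ∈ (Finset.univ.erase σ₀).erase σ₁.1, ‖f g‖ := norm_sum_le _ _
      _ = (((Finset.univ.erase σ₀).erase σ₁.1).card : ℝ) := by
          simp [hf, norm_stdAddChar]
  have hcard : ((Finset.univ.erase σ₀).erase σ₁.1).card + 2 = Fintype.card G := by
    have h2 : 1 < Fintype.card G := Fintype.one_lt_card_iff.mpr ⟨σ₁.1, σ₀, σ₁.2⟩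
    rw [Finset.card_erase_of_mem hmem, Finset.card_erase_of_mem (Finset.mem_univ _),
      Finset.card_univ]
    omega
  calc ‖∑ g : G, f g‖ ≤ ‖f σ₀ + f σ₁.1‖ + ‖∑ g ∈ (Finset.univ.erase σ₀).erase σ₁.1, f g‖ := by
        rw [hsplit]; exact norm_add_le _ _
    _ < 2 + (((Finset.univ.erase σ₀).erase σ₁.1).card : ℝ) := by linarith
    _ = (Fintype.card G : ℝ) := by
        rw [← hcard]; push_cast; ring

lemma exists_max_bound {α : Type*} [Fintype α] (f : α → ℝ) (hf : ∀ x, f x < 1) :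
    ∃ q : ℝ, 0 < q ∧ q < 1 ∧ ∀ x, f x ≤ q := by
  rcases isEmpty_or_nonempty α with h | h
  · exact ⟨1 / 2, by norm_num, by norm_num, fun x => (h.false x).elim⟩
  · obtain ⟨x₀, -, hx₀⟩ := Finset.exists_max_image Finset.univ f Finset.univ_nonempty
    refine ⟨max (f x₀) (1 / 2), ?_, ?_, fun x => le_max_of_le_left (hx₀ x (Finset.mem_univ x))⟩
    · exact lt_of_lt_of_le (by norm_num) (le_max_right _ _)
    · exact max_lt (hf x₀) (by norm_num)

lemma exists_q {G : Type*} [Fintype G] [DecidableEq G] [Nonempty G] (R : ℕ) [NeZero R]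
    (σ₀ : G) :
    ∃ q : ℝ, 0 < q ∧ q < 1 ∧ ∀ t : {σ : G // σ ≠ σ₀} → ZMod R, t ≠ 0 →
      ‖∑ g : G, ZMod.stdAddChar (extZ R σ₀ t g)‖ / (Fintype.card G : ℝ) ≤ q := by
  classical
  have hm0 : (0 : ℝ) < Fintype.card G := by
    have := Fintype.card_pos (α := G)
    positivity
  obtain ⟨q, hq0, hq1, hq⟩ := exists_max_bound
    (fun t : {t : {σ : G // σ ≠ σ₀} → ZMod R // t ≠ 0} =>
      ‖∑ g : G, ZMod.stdAddChar (extZ R σ₀ t.1 g)‖ / (Fintype.card G : ℝ))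
    (fun t => (div_lt_one hm0).mpr (norm_T_lt R σ₀ t.1 t.2))
  exact ⟨q, hq0, hq1, fun t ht => hq ⟨t, ht⟩⟩

/-- The probability that, among `n` i.i.d. uniform samples from `G`, the count of
occurrences of each `σ ≠ σ₀` is congruent to `a σ` mod `R`. -/
noncomputable def countProb (G : Type*) [Fintype G] [DecidableEq G] (R : ℕ) (σ₀ : G)
    (n : ℕ) (a : G → ZMod R) : ℝ :=
  (Nat.card {x : Fin n → G // ∀ σ : G, σ ≠ σ₀ →
      (((Finset.univ.filter (fun i => x i = σ)).card : ZMod R) = a σ)} : ℝ) /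
    (Fintype.card G : ℝ) ^ n

/-- For i.i.d. uniform samples on a finite nonempty set `G`, the probability that the
counts `g_n(σ)` are congruent to `a(σ)` mod `R` for all `σ ≠ σ₀` converges to
`R^{1−|G|}`, with an exponential rate `C e^{−cn}` whose constants depend only on `G`
and `R`. -/
theorem stmt_13 (G : Type*) [Fintype G] [DecidableEq G] [Nonempty G] (R : ℕ)
    (hR : 1 ≤ R) (σ₀ : G) :
    (∀ a : G → ZMod R,
      Tendsto (fun n => countProb G R σ₀ n a) atTop
        (nhds ((R : ℝ) ^ ((1 : ℤ) - (Fintype.card G : ℤ))))) ∧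
    ∃ C > (0 : ℝ), ∃ c > (0 : ℝ), ∀ n : ℕ, 1 ≤ n → ∀ a : G → ZMod R,
      |countProb G R σ₀ n a - (R : ℝ) ^ ((1 : ℤ) - (Fintype.card G : ℤ))| ≤
        C * Real.exp (-c * n) := by
  classical
  haveI : NeZero R := ⟨by omega⟩
  have hm0 : 0 < Fintype.card G := Fintype.card_pos
  have hmC : ((Fintype.card G : ℕ) : ℂ) ≠ 0 := Nat.cast_ne_zero.mpr hm0.ne'
  have hmR : (0 : ℝ) < (Fintype.card G : ℝ) := Nat.cast_pos.mpr hm0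
  have hR0 : (0 : ℝ) < R := by positivity
  have hRrne : ((R : ℝ)) ≠ 0 := hR0.ne'
  have hkm : Fintype.card {σ : G // σ ≠ σ₀} = Fintype.card G - 1 := by
    have h1 : Fintype.card {σ : G // ¬ σ = σ₀} =
        Fintype.card G - Fintype.card {σ : G // σ = σ₀} :=
      Fintype.card_subtype_compl _
    simpa [Fintype.card_subtype_eq] using h1
  have hL : (((R : ℝ) ^ ((1 : ℤ) - (Fintype.card G : ℤ)) : ℝ) : ℂ) =
      (R : ℂ)⁻¹ ^ Fintype.card {σ : G // σ ≠ σ₀} := by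
    have h1 : ((1 : ℤ) - (Fintype.card G : ℤ)) =
        -(Fintype.card {σ : G // σ ≠ σ₀} : ℤ) := by
      rw [hkm]; push_cast [Nat.cast_sub hm0]; ring
    push_cast
    rw [h1, zpow_neg, zpow_natCast, inv_pow]
  have hT0 : (∑ g : G, ZMod.stdAddChar
      (extZ R σ₀ (0 : {σ : G // σ ≠ σ₀} → ZMod R) g)) = (Fintype.card G : ℂ) := by
    have h0 : ∀ g : G, extZ R σ₀ (0 : {σ : G // σ ≠ σ₀} → ZMod R) g = 0 := by
      intro g; unfold extZ; split <;> rfl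
    simp [h0]
  have hcp : ∀ (n : ℕ) (a : G → ZMod R), ((countProb G R σ₀ n a : ℝ) : ℂ) =
      (R : ℂ)⁻¹ ^ Fintype.card {σ : G // σ ≠ σ₀} *
        ∑ t : {σ : G // σ ≠ σ₀} → ZMod R,
          ZMod.stdAddChar (- ∑ σ : {σ : G // σ ≠ σ₀}, t σ * a σ.1) *
            ((∑ g : G, ZMod.stdAddChar (extZ R σ₀ t g)) / (Fintype.card G : ℂ)) ^ n := by
    intro n a
    unfold countProb
    push_cast
    rw [key R σ₀ n a, mul_div_assoc, Finset.sum_div]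
    congr 1
    refine Finset.sum_congr rfl fun t _ => ?_
    rw [mul_div_assoc, div_pow]
  have hdiff : ∀ (n : ℕ) (a : G → ZMod R),
      ((countProb G R σ₀ n a : ℝ) : ℂ) -
        (((R : ℝ) ^ ((1 : ℤ) - (Fintype.card G : ℤ)) : ℝ) : ℂ) =
      (R : ℂ)⁻¹ ^ Fintype.card {σ : G // σ ≠ σ₀} *
        ∑ t ∈ Finset.univ.erase (0 : {σ : G // σ ≠ σ₀} → ZMod R),
          ZMod.stdAddChar (- ∑ σ : {σ : G // σ ≠ σ₀}, t σ * a σ.1) *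
            ((∑ g : G, ZMod.stdAddChar (extZ R σ₀ t g)) / (Fintype.card G : ℂ)) ^ n := by
    intro n a
    rw [hcp n a, ← Finset.add_sum_erase _ _ (Finset.mem_univ
      (0 : {σ : G // σ ≠ σ₀} → ZMod R))]
    have h0 : ZMod.stdAddChar (- ∑ σ : {σ : G // σ ≠ σ₀},
        (0 : {σ : G // σ ≠ σ₀} → ZMod R) σ * a σ.1) *
        ((∑ g : G, ZMod.stdAddChar (extZ R σ₀ (0 : {σ : G // σ ≠ σ₀} → ZMod R) g)) /
          (Fintype.card G : ℂ)) ^ n = 1 := by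
      rw [hT0]
      simp [div_self hmC]
    rw [h0, mul_add, mul_one, hL, add_sub_cancel_left]
  obtain ⟨q, hq_pos, hq_lt, hq_bd⟩ := exists_q R σ₀
  have bound : ∀ (n : ℕ) (a : G → ZMod R),
      |countProb G R σ₀ n a - (R : ℝ) ^ ((1 : ℤ) - (Fintype.card G : ℤ))| ≤ q ^ n := by
    intro n a
    have habs : |countProb G R σ₀ n a - (R : ℝ) ^ ((1 : ℤ) - (Fintype.card G : ℤ))| =
        ‖((countProb G R σ₀ n a : ℝ) : ℂ) -
          (((R : ℝ) ^ ((1 : ℤ) - (Fintype.card G : ℤ)) : ℝ) : ℂ)‖ := by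
      rw [← Complex.ofReal_sub, Complex.norm_real, Real.norm_eq_abs]
    rw [habs, hdiff n a]
    have hterm : ∀ t ∈ Finset.univ.erase (0 : {σ : G // σ ≠ σ₀} → ZMod R),
        ‖ZMod.stdAddChar (- ∑ σ : {σ : G // σ ≠ σ₀}, t σ * a σ.1) *
          ((∑ g : G, ZMod.stdAddChar (extZ R σ₀ t g)) / (Fintype.card G : ℂ)) ^ n‖ ≤
            q ^ n := by
      intro t htmem
      have ht0 : t ≠ 0 := (Finset.mem_erase.mp htmem).1
      rw [norm_mul, norm_stdAddChar, one_mul, norm_pow]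
      refine pow_le_pow_left₀ (norm_nonneg _) ?_ n
      rw [norm_div, Complex.norm_natCast]
      exact hq_bd t ht0
    calc ‖(R : ℂ)⁻¹ ^ Fintype.card {σ : G // σ ≠ σ₀} *
        ∑ t ∈ Finset.univ.erase (0 : {σ : G // σ ≠ σ₀} → ZMod R),
          ZMod.stdAddChar (- ∑ σ : {σ : G // σ ≠ σ₀}, t σ * a σ.1) *
            ((∑ g : G, ZMod.stdAddChar (extZ R σ₀ t g)) / (Fintype.card G : ℂ)) ^ n‖
        = (R : ℝ)⁻¹ ^ Fintype.card {σ : G // σ ≠ σ₀} *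
          ‖∑ t ∈ Finset.univ.erase (0 : {σ : G // σ ≠ σ₀} → ZMod R),
            ZMod.stdAddChar (- ∑ σ : {σ : G // σ ≠ σ₀}, t σ * a σ.1) *
              ((∑ g : G, ZMod.stdAddChar (extZ R σ₀ t g)) / (Fintype.card G : ℂ)) ^ n‖ := by
          rw [norm_mul, norm_pow, norm_inv, Complex.norm_natCast]
      _ ≤ (R : ℝ)⁻¹ ^ Fintype.card {σ : G // σ ≠ σ₀} *
            (((Finset.univ.erase (0 : {σ : G // σ ≠ σ₀} → ZMod R)).card : ℝ) * q ^ n) := by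
          refine mul_le_mul_of_nonneg_left ?_ (by positivity)
          calc ‖∑ t ∈ Finset.univ.erase (0 : {σ : G // σ ≠ σ₀} → ZMod R),
              ZMod.stdAddChar (- ∑ σ : {σ : G // σ ≠ σ₀}, t σ * a σ.1) *
                ((∑ g : G, ZMod.stdAddChar (extZ R σ₀ t g)) / (Fintype.card G : ℂ)) ^ n‖
              ≤ ∑ t ∈ Finset.univ.erase (0 : {σ : G // σ ≠ σ₀} → ZMod R),
                ‖ZMod.stdAddChar (- ∑ σ : {σ : G // σ ≠ σ₀}, t σ * a σ.1) *
                  ((∑ g : G, ZMod.stdAddChar (extZ R σ₀ t g)) /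
                    (Fintype.card G : ℂ)) ^ n‖ := norm_sum_le _ _
            _ ≤ ∑ _t ∈ Finset.univ.erase (0 : {σ : G // σ ≠ σ₀} → ZMod R), q ^ n :=
                Finset.sum_le_sum hterm
            _ = ((Finset.univ.erase (0 : {σ : G // σ ≠ σ₀} → ZMod R)).card : ℝ) * q ^ n := by
                rw [Finset.sum_const, nsmul_eq_mul]
      _ ≤ (R : ℝ)⁻¹ ^ Fintype.card {σ : G // σ ≠ σ₀} *
            ((R : ℝ) ^ Fintype.card {σ : G // σ ≠ σ₀} * q ^ n) := by
          refine mul_le_mul_of_nonneg_left (mul_le_mul_of_nonneg_right ?_ (by positivity))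
            (by positivity)
          have hcard : (Finset.univ.erase (0 : {σ : G // σ ≠ σ₀} → ZMod R)).card ≤
              R ^ Fintype.card {σ : G // σ ≠ σ₀} := by
            calc (Finset.univ.erase (0 : {σ : G // σ ≠ σ₀} → ZMod R)).card
                ≤ (Finset.univ : Finset ({σ : G // σ ≠ σ₀} → ZMod R)).card :=
                  Finset.card_erase_le
              _ = R ^ Fintype.card {σ : G // σ ≠ σ₀} := by
                  rw [Finset.card_univ, Fintype.card_fun, ZMod.card]
          exact_mod_cast hcard
      _ = q ^ n := by
          rw [← mul_assoc, inv_pow, inv_mul_cancel₀ (by positivity), one_mul]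
  have hqexp : ∀ n : ℕ, q ^ n = Real.exp (-(-Real.log q) * n) := by
    intro n
    rw [neg_neg, mul_comm, Real.exp_nat_mul, Real.exp_log hq_pos]
  constructor
  · intro a
    rw [← tendsto_sub_nhds_zero_iff]
    refine squeeze_zero_norm (a := fun n => q ^ n) (fun n => ?_) ?_
    · rw [Real.norm_eq_abs]; exact bound n a
    · exact tendsto_pow_atTop_nhds_zero_of_lt_one hq_pos.le hq_lt
  · refine ⟨1, one_pos, -Real.log q, ?_, fun n _ a => ?_⟩
    · have := Real.log_neg hq_pos hq_lt
      linarith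
    · rw [one_mul, ← hqexp n]
      exact bound n a
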